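/- (Uniform resolvent estimate for A_n) For every θ ∈ (π/2, π) there exists a constant C > 0 with the following property: for every σ > 0, every nonzero integer n, every λ ∈ ℂ ∖ {0} with |arg λ| ≤ θ, every continuous f : [−1, 1] → ℂ, every g, h ∈ ℂ, and every y : ℝ → ℂ twice continuously differentiable on [−1, 1] satisfying λ·y(x) − y''(x) + n²·y(x) = f(x) for all x ∈ [−1, 1], λ·h = y'(1) + g, y(−1) = 0, and y(1) = −σ·n²·h, one has |λ|²·( ∫_{−1}^{1} |y(x)|² dx + σ·n²·|h|² ) ≤ C²·( ∫_{−1}^{1} |f(x)|² dx + σ·n²·|g|² ). -/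

import Mathlib

open Set Real

lemma sin_ge_sin_of_mem (θ a : ℝ) (hθ1 : π/2 < θ) (hθ2 : θ < π)
    (ha1 : π/2 ≤ a) (ha2 : a ≤ θ) : Real.sin θ ≤ Real.sin a := by
  rw [← Real.sin_pi_sub θ, ← Real.sin_pi_sub a]
  apply Real.sin_le_sin_of_le_of_le_pi_div_two <;> linarith

lemma sector_bound (θ : ℝ) (hθ1 : π/2 < θ) (hθ2 : θ < π)
    (lam : ℂ) (hlam : lam ≠ 0) (harg : |lam.arg| ≤ θ) (N d : ℝ) (hN : 0 ≤ N) (hd : 0 ≤ d) :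
    ‖lam‖ * N ≤ (1 / Real.sin θ) * ‖lam * (N:ℂ) + (d:ℂ)‖ := by
  have hpi := Real.pi_pos
  have hs : 0 < Real.sin θ := Real.sin_pos_of_pos_of_lt_pi (by linarith) hθ2
  have hs1 : Real.sin θ ≤ 1 := Real.sin_le_one θ
  set z : ℂ := lam * (N:ℂ) + (d:ℂ) with hz
  have hzre : z.re = lam.re * N + d := by simp [hz]
  have hzim : z.im = lam.im * N := by simp [hz]
  have habs2 : ‖z‖ ^ 2 = z.re ^ 2 + z.im ^ 2 := by
    rw [Complex.sq_norm, Complex.normSq_apply]; ring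
  have hlam2 : ‖lam‖ ^ 2 = lam.re ^ 2 + lam.im ^ 2 := by
    rw [Complex.sq_norm, Complex.normSq_apply]; ring
  have hzabs : 0 ≤ ‖z‖ := norm_nonneg z
  have hlabs : 0 ≤ ‖lam‖ := norm_nonneg lam
  rcases le_or_gt 0 lam.re with hre | hre
  · have key : ‖lam‖ * N ≤ ‖z‖ := by
      have h2 : (‖lam‖ * N)^2 ≤ ‖z‖ ^ 2 := by
        rw [habs2, hzre, hzim, mul_pow, hlam2]
        nlinarith [mul_nonneg (mul_nonneg hre hN) hd]
      nlinarith [mul_nonneg hlabs hN]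
    calc ‖lam‖ * N ≤ ‖z‖ := key
      _ = 1 * ‖z‖ := (one_mul _).symm
      _ ≤ (1 / Real.sin θ) * ‖z‖ := by
          apply mul_le_mul_of_nonneg_right _ hzabs
          rw [le_div_iff₀ hs]; linarith
  · have hargge : π/2 ≤ |lam.arg| := by
      by_contra hc
      push_neg at hc
      rcases Complex.abs_arg_lt_pi_div_two_iff.1 hc with h | h
      · linarith
      · exact hlam h
    have hsinarg : Real.sin θ ≤ |Real.sin lam.arg| := by
      have : |Real.sin lam.arg| = Real.sin |lam.arg| := by
        rcases abs_cases lam.arg with ⟨h1, h2⟩ | ⟨h1, h2⟩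
        · rw [h1, abs_of_nonneg]
          apply Real.sin_nonneg_of_nonneg_of_le_pi <;> nlinarith [abs_nonneg lam.arg]
        · have hneg : Real.sin lam.arg ≤ 0 := by
            have := Real.sin_nonneg_of_nonneg_of_le_pi (x := -lam.arg) (by linarith) (by nlinarith)
            rw [Real.sin_neg] at this; linarith
          rw [h1, abs_of_nonpos hneg, ← Real.sin_neg]
      rw [this]
      exact sin_ge_sin_of_mem θ _ hθ1 hθ2 hargge harg
    have hsa : Real.sin lam.arg = lam.im / ‖lam‖ := Complex.sin_arg lam
    have hla : 0 < ‖lam‖ := norm_pos_iff.mpr hlam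
    have him : ‖lam‖ * Real.sin θ ≤ |lam.im| := by
      have : |Real.sin lam.arg| = |lam.im| / ‖lam‖ := by
        rw [hsa, abs_div, abs_of_pos hla]
      rw [this, le_div_iff₀ hla] at hsinarg
      linarith [hsinarg]
    have hzim' : |z.im| ≤ ‖z‖ := Complex.abs_im_le_norm z
    rw [hzim, abs_mul, abs_of_nonneg hN] at hzim'
    rw [div_mul_eq_mul_div, le_div_iff₀ hs]
    nlinarith [mul_le_mul_of_nonneg_right him hN]

theorem stmt2 (θ : ℝ) (hθ : θ ∈ Set.Ioo (Real.pi / 2) Real.pi) :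
    ∃ C > (0:ℝ), ∀ (σ : ℝ), 0 < σ → ∀ (n : ℤ), n ≠ 0 →
      ∀ (lam : ℂ), lam ≠ 0 → |lam.arg| ≤ θ →
      ∀ (f : ℝ → ℂ), ContinuousOn f (Icc (-1:ℝ) 1) →
      ∀ (g h : ℂ) (y y' y'' : ℝ → ℂ),
      (∀ x ∈ Icc (-1:ℝ) 1, HasDerivWithinAt y (y' x) (Icc (-1:ℝ) 1) x) →
      (∀ x ∈ Icc (-1:ℝ) 1, HasDerivWithinAt y' (y'' x) (Icc (-1:ℝ) 1) x) →
      ContinuousOn y'' (Icc (-1:ℝ) 1) →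
      (∀ x ∈ Icc (-1:ℝ) 1, lam * y x - y'' x + (n:ℂ)^2 * y x = f x) →
      lam * h = y' 1 + g →
      y (-1) = 0 →
      y 1 = -(σ:ℂ) * (n:ℂ)^2 * h →
      ‖lam‖ ^ 2 *
          ((∫ x in (-1:ℝ)..1, ‖y x‖ ^ 2) + σ * (n:ℝ)^2 * ‖h‖ ^ 2)
        ≤ C^2 *
          ((∫ x in (-1:ℝ)..1, ‖f x‖ ^ 2) + σ * (n:ℝ)^2 * ‖g‖ ^ 2) := by
  obtain ⟨hθ1, hθ2⟩ := hθ
  have hpi := Real.pi_pos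
  have hs : 0 < Real.sin θ := Real.sin_pos_of_pos_of_lt_pi (by linarith) hθ2
  refine ⟨2 / Real.sin θ, by positivity, ?_⟩
  intro σ hσ n hn lam hlam harg f hf g h y y' y'' hy hy' hy'' heq hbc1 hbc2 hbc3
  have hI : uIcc (-1:ℝ) 1 = Icc (-1:ℝ) 1 := uIcc_of_le (by norm_num)
  have hab : (-1:ℝ) ≤ 1 := by norm_num
  have hyc : ContinuousOn y (Icc (-1:ℝ) 1) := fun x hx => (hy x hx).continuousWithinAt
  have hy'c : ContinuousOn y' (Icc (-1:ℝ) 1) := fun x hx => (hy' x hx).continuousWithinAt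
  have hyac : ContinuousOn (fun x => ‖y x‖^2) (Icc (-1:ℝ) 1) :=
    (continuous_norm.comp_continuousOn hyc).pow 2
  have hy'ac : ContinuousOn (fun x => ‖y' x‖^2) (Icc (-1:ℝ) 1) :=
    (continuous_norm.comp_continuousOn hy'c).pow 2
  have hfac : ContinuousOn (fun x => ‖f x‖^2) (Icc (-1:ℝ) 1) :=
    (continuous_norm.comp_continuousOn hf).pow 2
  have int_yy : IntervalIntegrable (fun x => y x * star (y x)) MeasureTheory.volume (-1) 1 := by
    apply ContinuousOn.intervalIntegrable; rw [hI]; exact hyc.mul hyc.star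
  have int_y'y' : IntervalIntegrable (fun x => y' x * star (y' x)) MeasureTheory.volume (-1) 1 := by
    apply ContinuousOn.intervalIntegrable; rw [hI]; exact hy'c.mul hy'c.star
  have int_y''y : IntervalIntegrable (fun x => y'' x * star (y x)) MeasureTheory.volume (-1) 1 := by
    apply ContinuousOn.intervalIntegrable; rw [hI]; exact hy''.mul hyc.star
  -- integration by parts
  have hIBP : (∫ x in (-1:ℝ)..1, (y'' x * star (y x) + y' x * star (y' x)))
      = y' 1 * star (y 1) - y' (-1) * star (y (-1)) := by
    exact intervalIntegral.integral_eq_sub_of_hasDeriv_right_of_le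
      (f := fun x => y' x * star (y x))
      (f' := fun x => y'' x * star (y x) + y' x * star (y' x))
      hab (hy'c.mul hyc.star)
      (fun x hx => ((hy' x (Ioo_subset_Icc_self hx)).mul
        ((hy x (Ioo_subset_Icc_self hx)).star)).mono_of_mem_nhdsWithin
        (Icc_mem_nhdsGT_of_mem ⟨le_of_lt hx.1, hx.2⟩))
      (int_y''y.add int_y'y')
  have hIBP' : (∫ x in (-1:ℝ)..1, y'' x * star (y x))
      = y' 1 * star (y 1) - (∫ x in (-1:ℝ)..1, y' x * star (y' x)) := by
    rw [intervalIntegral.integral_add int_y''y int_y'y', hbc2] at hIBP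
    simp only [star_zero, mul_zero, sub_zero] at hIBP
    linear_combination hIBP
  -- multiply the equation by the conjugate and integrate
  have hsplit : (∫ x in (-1:ℝ)..1, f x * star (y x))
      = lam * (∫ x in (-1:ℝ)..1, y x * star (y x))
        - (∫ x in (-1:ℝ)..1, y'' x * star (y x))
        + (n:ℂ)^2 * (∫ x in (-1:ℝ)..1, y x * star (y x)) := by
    rw [← intervalIntegral.integral_const_mul lam, ← intervalIntegral.integral_const_mul ((n:ℂ)^2),
      ← intervalIntegral.integral_sub (int_yy.const_mul lam) int_y''y,
      ← intervalIntegral.integral_add ((int_yy.const_mul lam).sub int_y''y) (int_yy.const_mul _)]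
    apply intervalIntegral.integral_congr
    intro x hx
    rw [hI] at hx
    simp only
    rw [← heq x hx]; ring
  -- realification
  have mulstar : ∀ z : ℂ, z * star z = ((‖z‖ ^ 2 : ℝ) : ℂ) := by
    intro z
    rw [Complex.star_def, Complex.mul_conj]
    norm_cast
    exact (Complex.sq_norm z).symm
  set Ny : ℝ := ∫ x in (-1:ℝ)..1, ‖y x‖ ^ 2 with hNy
  set Ny' : ℝ := ∫ x in (-1:ℝ)..1, ‖y' x‖ ^ 2 with hNy'
  set Gf : ℝ := ∫ x in (-1:ℝ)..1, ‖f x‖ ^ 2 with hGf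
  have hIyr : (∫ x in (-1:ℝ)..1, y x * star (y x)) = ((Ny : ℝ) : ℂ) := by
    rw [hNy, ← intervalIntegral.integral_ofReal]
    apply intervalIntegral.integral_congr
    intro x _
    exact mulstar (y x)
  have hIy'r : (∫ x in (-1:ℝ)..1, y' x * star (y' x)) = ((Ny' : ℝ) : ℂ) := by
    rw [hNy', ← intervalIntegral.integral_ofReal]
    apply intervalIntegral.integral_congr
    intro x _
    exact mulstar (y' x)
  set N : ℝ := Ny + σ * (n:ℝ)^2 * ‖h‖ ^ 2 with hN
  set D : ℝ := Ny' + (n:ℝ)^2 * Ny with hD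
  set G : ℝ := Gf + σ * (n:ℝ)^2 * ‖g‖ ^ 2 with hG
  -- the key complex identity
  have hstar1 : star (y 1) = -(σ:ℂ) * (n:ℂ)^2 * star h := by
    rw [hbc3]
    simp only [star_mul', star_neg]
    rw [show star ((σ:ℂ)) = (σ:ℂ) from by rw [Complex.star_def, Complex.conj_ofReal],
      show star ((n:ℂ)^2) = (n:ℂ)^2 from by rw [Complex.star_def, map_pow, map_intCast]]
  have hy'1 : y' 1 = lam * h - g := by linear_combination -hbc1
  have key : lam * (N:ℂ) + (D:ℂ)
      = (∫ x in (-1:ℝ)..1, f x * star (y x)) + (σ:ℂ) * (n:ℂ)^2 * (g * star h) := by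
    have e1 : ((N : ℝ) : ℂ)
        = (∫ x in (-1:ℝ)..1, y x * star (y x)) + (σ:ℂ) * (n:ℂ)^2 * (h * star h) := by
      rw [hN, hIyr, mulstar h]; push_cast; ring
    have e2 : ((D : ℝ) : ℂ)
        = (∫ x in (-1:ℝ)..1, y' x * star (y' x))
          + (n:ℂ)^2 * (∫ x in (-1:ℝ)..1, y x * star (y x)) := by
      rw [hD, hIyr, hIy'r]; push_cast; ring
    rw [e1, e2, hsplit, hIBP', hy'1, hstar1]
    ring
  -- nonnegativity
  have hNy0 : 0 ≤ Ny := intervalIntegral.integral_nonneg hab (fun u _ => by positivity)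
  have hNy'0 : 0 ≤ Ny' := intervalIntegral.integral_nonneg hab (fun u _ => by positivity)
  have hGf0 : 0 ≤ Gf := intervalIntegral.integral_nonneg hab (fun u _ => by positivity)
  have hsn : 0 ≤ σ * (n:ℝ)^2 := mul_nonneg hσ.le (sq_nonneg _)
  have hN0 : 0 ≤ N := add_nonneg hNy0 (mul_nonneg hsn (sq_nonneg _))
  have hD0 : 0 ≤ D := add_nonneg hNy'0 (mul_nonneg (sq_nonneg _) hNy0)
  have hG0 : 0 ≤ G := add_nonneg hGf0 (mul_nonneg hsn (sq_nonneg _))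
  -- sector estimate
  have hE : ‖lam‖ * N ≤ (1 / Real.sin θ) * ‖lam * (N:ℂ) + (D:ℂ)‖ :=
    sector_bound θ hθ1 hθ2 lam hlam harg N D hN0 hD0
  -- Young's inequality bound on the right-hand side
  have hl : 0 < ‖lam‖ := norm_pos_iff.mpr hlam
  set ε : ℝ := ‖lam‖ * Real.sin θ / 2 with hε
  have hεpos : 0 < ε := by rw [hε]; positivity
  have amgm : ∀ a b : ℝ, 0 ≤ a → 0 ≤ b → a * b ≤ ε/2 * a^2 + 1/(2*ε) * b^2 := by
    intro a b ha hb
    rw [show ε/2*a^2 + 1/(2*ε)*b^2 = (ε^2*a^2 + b^2)/(2*ε) by field_simp,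
      le_div_iff₀ (by linarith)]
    nlinarith [sq_nonneg (ε*a - b)]
  have hIf : ‖∫ x in (-1:ℝ)..1, f x * star (y x)‖ ≤ ε/2 * Ny + 1/(2*ε) * Gf := by
    have h1 : ‖∫ x in (-1:ℝ)..1, f x * star (y x)‖
        ≤ ∫ x in (-1:ℝ)..1, ‖f x * star (y x)‖ := by
      simpa using intervalIntegral.norm_integral_le_integral_norm
        (f := fun x => f x * star (y x)) hab
    have h2 : (∫ x in (-1:ℝ)..1, ‖f x * star (y x)‖)
        ≤ ∫ x in (-1:ℝ)..1, (ε/2 * ‖y x‖^2 + 1/(2*ε) * ‖f x‖^2) := by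
      apply intervalIntegral.integral_mono_on hab
      · apply ContinuousOn.intervalIntegrable; rw [hI]
        exact continuous_norm.comp_continuousOn (hf.mul hyc.star)
      · apply ContinuousOn.intervalIntegrable; rw [hI]
        exact (continuousOn_const.mul hyac).add (continuousOn_const.mul hfac)
      · intro x hx
        rw [norm_mul]
        have : ‖star (y x)‖ = ‖y x‖ := by
          rw [Complex.star_def, Complex.norm_conj]
        rw [this, mul_comm]
        exact amgm _ _ (norm_nonneg _) (norm_nonneg _)
    have h3 : (∫ x in (-1:ℝ)..1, (ε/2 * ‖y x‖^2 + 1/(2*ε) * ‖f x‖^2))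
        = ε/2 * Ny + 1/(2*ε) * Gf := by
      rw [intervalIntegral.integral_add, intervalIntegral.integral_const_mul,
        intervalIntegral.integral_const_mul]
      · apply ContinuousOn.intervalIntegrable; rw [hI]
        exact continuousOn_const.mul hyac
      · apply ContinuousOn.intervalIntegrable; rw [hI]
        exact continuousOn_const.mul hfac
    linarith
  have hgh : ‖(σ:ℂ) * (n:ℂ)^2 * (g * star h)‖
      ≤ σ * (n:ℝ)^2 * (ε/2 * ‖h‖^2 + 1/(2*ε) * ‖g‖^2) := by
    rw [norm_mul, norm_mul, norm_mul]
    have e1 : ‖(σ:ℂ)‖ = σ := by rw [Complex.norm_real, Real.norm_eq_abs, abs_of_pos hσ]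
    have e2 : ‖(n:ℂ)^2‖ = (n:ℝ)^2 := by
      rw [norm_pow, Complex.norm_intCast, sq_abs]
    have e3 : ‖star h‖ = ‖h‖ := by
      rw [Complex.star_def, Complex.norm_conj]
    rw [e1, e2, e3]
    calc σ * (n:ℝ)^2 * (‖g‖ * ‖h‖)
        = σ * (n:ℝ)^2 * (‖h‖ * ‖g‖) := by ring
      _ ≤ σ * (n:ℝ)^2 * (ε/2 * ‖h‖^2 + 1/(2*ε) * ‖g‖^2) :=
          mul_le_mul_of_nonneg_left
            (amgm _ _ (norm_nonneg _) (norm_nonneg _)) hsn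
  have hF : ‖lam * (N:ℂ) + (D:ℂ)‖ ≤ ε/2 * N + 1/(2*ε) * G := by
    rw [key]
    calc ‖(∫ x in (-1:ℝ)..1, f x * star (y x)) + (σ:ℂ) * (n:ℂ)^2 * (g * star h)‖
        ≤ ‖∫ x in (-1:ℝ)..1, f x * star (y x)‖
          + ‖(σ:ℂ) * (n:ℂ)^2 * (g * star h)‖ := norm_add_le _ _
      _ ≤ (ε/2 * Ny + 1/(2*ε) * Gf)
          + σ * (n:ℝ)^2 * (ε/2 * ‖h‖^2 + 1/(2*ε) * ‖g‖^2) := by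
          exact add_le_add hIf hgh
      _ = ε/2 * N + 1/(2*ε) * G := by rw [hN, hG]; ring
  -- conclusion
  have final1 : ‖lam‖ * N ≤ (1 / Real.sin θ) * (ε/2 * N + 1/(2*ε) * G) :=
    le_trans hE (mul_le_mul_of_nonneg_left hF (by positivity))
  have main : ‖lam‖ ^ 2 * N ≤ ‖lam‖ ^ 2 * N / 4 + G / (Real.sin θ)^2 := by
    calc ‖lam‖ ^ 2 * N = ‖lam‖ * (‖lam‖ * N) := by ring
      _ ≤ ‖lam‖ * ((1 / Real.sin θ) * (ε/2 * N + 1/(2*ε) * G)) :=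
          mul_le_mul_of_nonneg_left final1 hl.le
      _ = ‖lam‖ ^ 2 * N / 4 + G / (Real.sin θ)^2 := by
          rw [hε]; field_simp; ring
  have hGs : 0 ≤ G / (Real.sin θ)^2 := by positivity
  have : (2 / Real.sin θ)^2 * G = 4 * (G / (Real.sin θ)^2) := by
    rw [div_pow]; ring
  rw [this]
  linarith
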